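/- Let G be a graph in which every edge lies in at least k triangles (i.e., any two adjacent vertices have at least k common neighbors). Then for any edge {x,y} and any t ≥ 2 with t ≤ k, the number of simple paths on t vertices from x to y is at least (k - t)^{t-2}. -/

import Mathlib

open SimpleGraph

/-- the number of simple paths on `t` vertices from `x` to `y` in `G` -/
noncomputable def pathCount {V : Type*} (G : SimpleGraph V) (x y : V) (t : ℕ) : ℕ :=
  Set.ncard {w : G.Walk x y | w.IsPath ∧ w.length + 1 = t}

lemma walkSet_finite {V : Type*} [Fintype V] (G : SimpleGraph V) (x y : V) (s : ℕ)
    (P : G.Walk x y → Prop) :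
    {w : G.Walk x y | P w ∧ w.length + 1 = s}.Finite := by
  classical
  haveI : LocallyFinite G := fun v => Set.Finite.fintype (Set.toFinite _)
  apply Set.Finite.subset (G.finsetWalkLength (s - 1) x y).finite_toSet
  rintro w ⟨-, hl⟩
  simp only [Finset.mem_coe, SimpleGraph.mem_finsetWalkLength_iff]
  omega

lemma aux13 {V : Type*} [Fintype V] (G : SimpleGraph V) (k : ℕ)
    (hk : ∀ u v : V, G.Adj u v → k ≤ (G.neighborSet u ∩ G.neighborSet v).ncard) :
    ∀ s : ℕ, 2 ≤ s → ∀ (S : Finset V) (x y : V), G.Adj x y → x ∉ S → y ∉ S →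
    (k - s - S.card) ^ (s - 2) ≤
      Set.ncard {w : G.Walk x y |
        (w.IsPath ∧ ∀ v ∈ w.support, v ∉ S) ∧ w.length + 1 = s} := by
  intro s hs
  induction s, hs using Nat.le_induction with
  | base =>
    intro S x y hxy hxS hyS
    have hmem : (Walk.cons hxy Walk.nil) ∈ {w : G.Walk x y |
        (w.IsPath ∧ ∀ v ∈ w.support, v ∉ S) ∧ w.length + 1 = 2} := by
      refine ⟨⟨?_, ?_⟩, by simp⟩
      · simp [Walk.isPath_iff_eq_nil, hxy.ne]
      · intro v hv
        simp only [Walk.support_cons, Walk.support_nil, List.mem_cons,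
          List.mem_singleton, List.not_mem_nil, or_false] at hv
        rcases hv with rfl | rfl <;> assumption
    have hpos : 0 < Set.ncard {w : G.Walk x y |
        (w.IsPath ∧ ∀ v ∈ w.support, v ∉ S) ∧ w.length + 1 = 2} := by
      rw [Set.ncard_pos (walkSet_finite G x y 2 _)]
      exact ⟨_, hmem⟩
    simpa [Nat.one_le_iff_ne_zero, Nat.pos_iff_ne_zero] using hpos
  | succ s hs IH =>
    intro S x y hxy hxS hyS
    classical
    set n : ℕ := (k - s - (insert x S).card) ^ (s - 2) with hn
    set A : Set (G.Walk x y) := {w : G.Walk x y |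
        (w.IsPath ∧ ∀ v ∈ w.support, v ∉ S) ∧ w.length + 1 = s + 1} with hA
    set T : Set V := (G.neighborSet x ∩ G.neighborSet y) \ ↑S with hT
    have hTfin : T.Finite := Set.toFinite _
    have hAfin : A.Finite := walkSet_finite G x y (s + 1) _
    -- per-choice embeddings
    have hembex : ∀ v : V, v ∈ T → ∃ g : Fin n → {w : G.Walk v y |
        (w.IsPath ∧ ∀ u ∈ w.support, u ∉ insert x S) ∧ w.length + 1 = s},
        Function.Injective g := by
      intro v hv
      obtain ⟨⟨hvx, hvy⟩, hvS⟩ := hv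
      have hvy' : G.Adj v y := hvy.symm
      have hvnex : v ≠ x := fun h => G.loopless.irrefl x (h ▸ hvx.symm)
      have hvS' : v ∉ S := fun h => hvS (Finset.mem_coe.mpr h)
      have hIH := IH (insert x S) v y hvy' (by simp [hvnex, hvS'])
        (by simp [hxy.ne', hyS])
      have hfin := walkSet_finite G v y s
        (fun w => w.IsPath ∧ ∀ u ∈ w.support, u ∉ insert x S)
      haveI := hfin.fintype
      have hcard : n ≤ Fintype.card {w : G.Walk v y |
          (w.IsPath ∧ ∀ u ∈ w.support, u ∉ insert x S) ∧ w.length + 1 = s} := by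
        rwa [Set.ncard_eq_toFinset_card', Set.toFinset_card] at hIH
      have : Nonempty (Fin n ↪ {w : G.Walk v y |
          (w.IsPath ∧ ∀ u ∈ w.support, u ∉ insert x S) ∧ w.length + 1 = s}) := by
        rw [Function.Embedding.nonempty_iff_card_le]
        simpa using hcard
      obtain ⟨g⟩ := this
      exact ⟨g, g.injective⟩
    choose g hg using hembex
    -- the big injection
    haveI : Finite ↥A := hAfin.to_subtype
    haveI : Finite ↥T := hTfin.to_subtype
    have hmap : ∀ (v : ↥T) (i : Fin n),
        (Walk.cons (G := G) (v := v.1)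
          ((G.mem_neighborSet x v.1).mp ((Set.mem_inter_iff _ _ _).mp ((Set.mem_diff _).mp v.2).1).1)
          (g v.1 v.2 i).1) ∈ A := by
      intro v i
      obtain ⟨⟨hwp, hwS⟩, hwl⟩ := (g v.1 v.2 i).2
      refine ⟨⟨?_, ?_⟩, by simp [hwl]⟩
      · exact hwp.cons (fun hx => (hwS x hx) (by simp))
      · intro u hu
        rw [Walk.support_cons, List.mem_cons] at hu
        rcases hu with rfl | hu
        · exact hxS
        · exact fun huS => hwS u hu (by simp [huS])
    let F : ↥T × Fin n → ↥A := fun p => ⟨_, hmap p.1 p.2⟩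
    have hFinj : Function.Injective F := by
      rintro ⟨v, i⟩ ⟨v', i'⟩ hFe
      have he : (F (v, i)).1 = (F (v', i')).1 := congrArg Subtype.val hFe
      have hv : v.1 = v'.1 := by
        have h1 := congrArg (fun w => w.getVert 1) he
        simpa [F, Walk.getVert_cons_succ, Walk.getVert_zero] using h1
      have hv' : v = v' := Subtype.ext hv
      subst hv'
      simp only [F, Walk.cons.injEq, heq_eq_eq, true_and, Subtype.mk.injEq] at he
      have h2 : (g v.1 v.2 i) = (g v.1 v.2 i') := Subtype.ext he
      have := hg v.1 v.2 h2
      simp [this]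
    have hcard1 : T.ncard * n ≤ A.ncard := by
      calc T.ncard * n = Nat.card (↥T × Fin n) := by
            rw [Nat.card_prod, Nat.card_coe_set_eq, Nat.card_eq_fintype_card,
              Fintype.card_fin]
        _ ≤ Nat.card ↥A := Nat.card_le_card_of_injective F hFinj
        _ = A.ncard := Nat.card_coe_set_eq A
    -- size of T
    have hTcard : k - S.card ≤ T.ncard := by
      have h1 : k ≤ (G.neighborSet x ∩ G.neighborSet y).ncard := hk x y hxy
      have h2 : (G.neighborSet x ∩ G.neighborSet y).ncard ≤ T.ncard + S.card := by
        have := Set.ncard_le_ncard_diff_add_ncard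
          (G.neighborSet x ∩ G.neighborSet y) (↑S : Set V) (Set.toFinite _)
        simpa [hT, Set.ncard_coe_finset] using this
      omega
    -- arithmetic
    have hins : (insert x S).card = S.card + 1 := Finset.card_insert_of_notMem hxS
    calc (k - (s + 1) - S.card) ^ (s + 1 - 2)
        = (k - (s + 1) - S.card) * (k - (s + 1) - S.card) ^ (s - 2) := by
          have : s + 1 - 2 = (s - 2) + 1 := by omega
          rw [this, pow_succ, mul_comm]
      _ ≤ T.ncard * n := by
          apply Nat.mul_le_mul
          · omega
          · rw [hn, hins]
            apply Nat.pow_le_pow_left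
            omega
      _ ≤ A.ncard := hcard1

theorem stmt13 {V : Type*} [Fintype V] (G : SimpleGraph V) (k t : ℕ)
    (hk : ∀ u v : V, G.Adj u v → k ≤ (G.neighborSet u ∩ G.neighborSet v).ncard)
    (ht : 2 ≤ t) (htk : t ≤ k) (x y : V) (hxy : G.Adj x y) :
    (k - t) ^ (t - 2) ≤ pathCount G x y t := by
  have h := aux13 G k hk t ht ∅ x y hxy (Finset.notMem_empty x) (Finset.notMem_empty y)
  simp only [Finset.card_empty, Nat.sub_zero] at h
  unfold pathCount
  convert h using 2
  ext w
  simp [and_assoc]
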